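/- Let ℓ > 5 be an integer and let N' be the rank-2 lattice with Gram matrix [[4,4ℓ],[4ℓ,4]] with basis h_1, h_2. Suppose c, h are elements of N' with (h,h) = 4, c and h linearly independent over Z, (c,c) ≥ 0, and 0 < (c,h) < 16. Then the determinant of the Gram matrix of the sublattice generated by c and h, namely (c,h)^2 - 4(c,c), is a positive integer strictly less than 256 that must be divisible by 16ℓ^2 - 16 > 256, a contradiction; hence no such c exists. Equivalently: every c in the lattice with (c,c) ≥ 0 and 0 < (c,h) < 16 is a rational multiple of h. -/

import Mathlib

/-- Bilinear form with Gram matrix [[4,4ℓ],[4ℓ,4]] in the basis h₁, h₂. -/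
def B2 (ℓ : ℤ) (x y : Fin 2 → ℤ) : ℤ :=
  4 * x 0 * y 0 + 4 * ℓ * (x 0 * y 1 + x 1 * y 0) + 4 * x 1 * y 1

theorem low_degree_curve_is_rational_multiple (ℓ : ℤ) (hℓ : 5 < ℓ)
    (c h : Fin 2 → ℤ) (hh : B2 ℓ h h = 4) (hc : 0 ≤ B2 ℓ c c)
    (hch₀ : 0 < B2 ℓ c h) (hch : B2 ℓ c h < 16) :
    ∃ q : ℚ, ∀ i, (c i : ℚ) = q * (h i : ℚ) := by
  set d : ℤ := c 0 * h 1 - c 1 * h 0 with hdef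
  have key : (B2 ℓ c h) ^ 2 - (B2 ℓ c c) * (B2 ℓ h h) = (16 * ℓ ^ 2 - 16) * d ^ 2 := by
    simp only [B2, hdef]; ring
  rw [hh] at key
  have hd : d = 0 := by
    nlinarith [sq_nonneg d, sq_nonneg (d * (ℓ - 6)), sq_nonneg (B2 ℓ c h), hch₀, hch, hc, key]
  have hd' : (c 0 : ℚ) * (h 1 : ℚ) = (c 1 : ℚ) * (h 0 : ℚ) := by
    have : (c 0 * h 1 : ℤ) = c 1 * h 0 := by linarith [hd]
    exact_mod_cast congrArg (fun z : ℤ => (z : ℚ)) this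
  by_cases h0 : (h 0 : ℚ) = 0
  · have h1 : (h 1 : ℚ) ≠ 0 := by
      intro h1
      have e0 : h 0 = 0 := by exact_mod_cast h0
      have e1 : h 1 = 0 := by exact_mod_cast h1
      simp [B2, e0, e1] at hh
    refine ⟨(c 1 : ℚ) / (h 1 : ℚ), ?_⟩
    intro i
    fin_cases i
    · have : (c 0 : ℚ) * (h 1 : ℚ) = 0 := by rw [hd', h0]; ring
      rcases mul_eq_zero.mp this with h | h
      · simp [h, h0]
      · exact absurd h h1
    · field_simp
      rfl
  · refine ⟨(c 0 : ℚ) / (h 0 : ℚ), ?_⟩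
    intro i
    fin_cases i
    · field_simp
      rfl
    · field_simp
      exact hd'.symm
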